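/- arXiv:2402.10759 — 2 statements merged into one kernel-verified Lean document; each statement's English description precedes it below -/
import Mathlib

section
/- Let σ, τ > −1 and β ∈ ℝ satisfy max(σ,τ)/2 − 1 < β ≤ (σ+τ)/2. Then there exists a constant c > 0 such that for every holomorphic function f on the unit disc 𝔻, c · ∫_𝔻 |f'(z)|² (1−|z|²)^{σ+τ−2β} dA(z) ≤ ∫_𝔻 ∫_𝔻 (|f(z) − f(w)|² / |1 − conj(w)·z|^{2(β+2)}) (1−|z|²)^σ (1−|w|²)^τ dA(z) dA(w). -/
open MeasureTheory Metric ComplexConjugate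

/-- The normalized Lebesgue area measure `dA = (1/π) dx dy` on `ℂ`. -/
noncomputable def dA : Measure ℂ := ENNReal.ofReal (1 / Real.pi) • volume

set_option maxHeartbeats 1000000

section AuxiliaryLemmas

open intervalIntegral Set

lemma cs_interval (g : ℝ → ℝ) (hg : Continuous g) :
    (∫ θ in (0:ℝ)..(2*Real.pi), g θ)^2
      ≤ (2*Real.pi) * ∫ θ in (0:ℝ)..(2*Real.pi), (g θ)^2 := by
  have hpi : (0:ℝ) < 2*Real.pi := by positivity
  set I := ∫ θ in (0:ℝ)..(2*Real.pi), g θ with hI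
  set m : ℝ := I / (2*Real.pi) with hm
  have hint1 : IntervalIntegrable g volume 0 (2*Real.pi) := hg.intervalIntegrable _ _
  have hint2 : IntervalIntegrable (fun θ => (g θ)^2) volume 0 (2*Real.pi) :=
    (hg.pow 2).intervalIntegrable _ _
  have h0 : (0:ℝ) ≤ ∫ θ in (0:ℝ)..(2*Real.pi), (g θ - m)^2 :=
    intervalIntegral.integral_nonneg hpi.le (fun x _ => sq_nonneg _)
  have hexp : ∫ θ in (0:ℝ)..(2*Real.pi), (g θ - m)^2
      = (∫ θ in (0:ℝ)..(2*Real.pi), (g θ)^2) - 2*m*I + (2*Real.pi)*m^2 := by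
    have h1 : ∀ θ, (g θ - m)^2 = (g θ)^2 - (2*m) * g θ + m^2 := by intro θ; ring
    simp_rw [h1]
    rw [intervalIntegral.integral_add (hint2.sub (hint1.const_mul (2*m)))
        intervalIntegrable_const,
      intervalIntegral.integral_sub hint2 (hint1.const_mul (2*m)),
      intervalIntegral.integral_const_mul, intervalIntegral.integral_const]
    simp only [smul_eq_mul, ← hI]
    ring
  rw [hexp] at h0
  have hmI : m * (2*Real.pi) = I := by
    rw [hm]; field_simp
  nlinarith [h0, sq_nonneg m, hpi]

lemma circle_bound (f : ℂ → ℂ) (hf : DifferentiableOn ℂ f (ball 0 1))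
    {z : ℂ} (hz : ‖z‖ < 1) {r : ℝ} (hr0 : 0 < r) (hrρ : r ≤ (1 - ‖z‖)/2) :
    2*Real.pi*r^2*‖deriv f z‖^2
      ≤ ∫ θ in (0:ℝ)..(2*Real.pi), ‖f (circleMap z r θ) - f z‖^2 := by
  have hzb : z ∈ ball (0:ℂ) 1 := by simpa [mem_ball, dist_eq_norm] using hz
  have hsub : closedBall z r ⊆ ball (0:ℂ) 1 := by
    intro w hw
    simp only [mem_closedBall, dist_eq_norm] at hw
    simp only [mem_ball, dist_zero_right]
    have h1 : ‖w‖ ≤ ‖w - z‖ + ‖z‖ := by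
      simpa using norm_add_le (w - z) z
    linarith
  have hcont : Continuous fun θ => ‖f (circleMap z r θ) - f z‖ := by
    have hmaps : ∀ θ, circleMap z r θ ∈ ball (0:ℂ) 1 := fun θ =>
      hsub (sphere_subset_closedBall (circleMap_mem_sphere z hr0.le θ))
    exact ((hf.continuousOn.comp_continuous (continuous_circleMap z r) hmaps).sub
      continuous_const).norm
  have hds : DifferentiableOn ℂ (dslope f z) (ball 0 1) :=
    (Complex.differentiableOn_dslope (isOpen_ball.mem_nhds hzb)).mpr hf
  have hd : DiffContOnCl ℂ (dslope f z) (ball z r) :=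
    DifferentiableOn.diffContOnCl
      (hds.mono (closure_ball_subset_closedBall.trans hsub))
  have hcauchy := hd.circleIntegral_sub_inv_smul (mem_ball_self hr0)
  rw [dslope_same] at hcauchy
  have hnorm1 : ‖(2 * Real.pi * Complex.I : ℂ) • deriv f z‖
      = 2*Real.pi*‖deriv f z‖ := by
    rw [norm_smul]
    simp [Complex.norm_real, abs_of_pos Real.pi_pos]
  have hFnorm : ∀ θ : ℝ, ‖deriv (circleMap z r) θ •
      ((circleMap z r θ - z)⁻¹ • dslope f z (circleMap z r θ))‖
      = ‖f (circleMap z r θ) - f z‖ / r := by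
    intro θ
    rw [dslope_of_ne f (circleMap_ne_center hr0.ne'), norm_smul, norm_smul]
    rw [deriv_circleMap, circleMap_sub_center]
    simp only [slope_def_field, norm_mul, norm_inv,
      norm_circleMap_zero, Complex.norm_I, abs_of_pos hr0, map_div₀]
    rw [show circleMap z r θ - z = circleMap 0 r θ from circleMap_sub_center _ _ _,
      norm_div, norm_circleMap_zero, abs_of_pos hr0]
    field_simp
  have hstep : 2*Real.pi*r*‖deriv f z‖
      ≤ ∫ θ in (0:ℝ)..(2*Real.pi), ‖f (circleMap z r θ) - f z‖ := by
    have h1 : 2*Real.pi*‖deriv f z‖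
        ≤ ∫ θ in (0:ℝ)..(2*Real.pi),
            ‖f (circleMap z r θ) - f z‖ / r := by
      rw [← hnorm1, ← hcauchy]
      rw [circleIntegral]
      refine le_trans (intervalIntegral.norm_integral_le_integral_norm
        (by positivity)) (le_of_eq ?_)
      exact intervalIntegral.integral_congr fun θ _ => hFnorm θ
    have h2 : ∫ θ in (0:ℝ)..(2*Real.pi), ‖f (circleMap z r θ) - f z‖ / r
        = (∫ θ in (0:ℝ)..(2*Real.pi), ‖f (circleMap z r θ) - f z‖) / r := by
      rw [intervalIntegral.integral_div]
    rw [h2] at h1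
    have h3 := (le_div_iff₀ hr0).mp h1
    have h4 : 2*Real.pi*r*‖deriv f z‖ = 2*Real.pi*‖deriv f z‖*r := by ring
    rw [h4]; exact h3
  have hCS := cs_interval _ hcont
  have hnn : 0 ≤ ∫ θ in (0:ℝ)..(2*Real.pi), ‖f (circleMap z r θ) - f z‖ :=
    intervalIntegral.integral_nonneg (by positivity) (fun x _ => norm_nonneg _)
  have hsq : (2*Real.pi*r*‖deriv f z‖)^2
      ≤ (∫ θ in (0:ℝ)..(2*Real.pi), ‖f (circleMap z r θ) - f z‖)^2 := by
    apply pow_le_pow_left₀ (by positivity) hstep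
  have := hsq.trans hCS
  nlinarith [Real.pi_pos, sq_nonneg (‖deriv f z‖*r)]

lemma polar_symm_eq (p : ℝ × ℝ) :
    Complex.polarCoord.symm p = circleMap 0 p.1 p.2 := by
  simp [Complex.polarCoord_symm_apply, circleMap, Complex.exp_mul_I]

lemma annulus_bound (f : ℂ → ℂ) (hf : DifferentiableOn ℂ f (ball 0 1))
    {z : ℂ} (hz : ‖z‖ < 1) :
    15/32*Real.pi*((1-‖z‖)/2)^4*‖deriv f z‖^2
      ≤ ∫ w in closedBall z ((1-‖z‖)/2) \ closedBall z ((1-‖z‖)/4),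
          ‖f w - f z‖^2 ∂volume := by
  set ρ : ℝ := (1-‖z‖)/2 with hρdef
  have hρ : 0 < ρ := by rw [hρdef]; linarith
  have hρ4 : (1-‖z‖)/4 = ρ/2 := by rw [hρdef]; ring
  rw [hρ4]
  set A : Set ℂ := closedBall z ρ \ closedBall z (ρ/2) with hA
  set A₀ : Set ℂ := closedBall 0 ρ \ closedBall 0 (ρ/2) with hA₀
  have hmA : MeasurableSet A := measurableSet_closedBall.diff measurableSet_closedBall
  have hmA₀ : MeasurableSet A₀ := measurableSet_closedBall.diff measurableSet_closedBall
  set G : ℂ → ℝ := fun w => ‖f w - f z‖^2 with hG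
  set H : ℂ → ℝ := fun w => ‖f (z + w) - f z‖^2 with hH
  -- Step 1: translation
  have step1 : ∫ w in A, G w ∂volume = ∫ w, Set.indicator A₀ H w ∂volume := by
    rw [← MeasureTheory.integral_indicator hmA]
    rw [← MeasureTheory.integral_add_left_eq_self (fun w => Set.indicator A G w) z]
    congr 1
    funext w
    by_cases hw : w ∈ A₀
    · have hw' : z + w ∈ A := by
        simp only [hA, hA₀, mem_diff, mem_closedBall, dist_eq_norm] at hw ⊢
        simpa using hw
      simp [Set.indicator_of_mem hw, Set.indicator_of_mem hw', hG, hH]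
    · have hw' : z + w ∉ A := by
        simp only [hA, hA₀, mem_diff, mem_closedBall, dist_eq_norm] at hw ⊢
        simpa using hw
      simp [Set.indicator_of_notMem hw, Set.indicator_of_notMem hw']
  -- Step 2: polar coordinates
  have step2 : ∫ w, Set.indicator A₀ H w ∂volume
      = ∫ p in polarCoord.target, p.1 • Set.indicator A₀ H (Complex.polarCoord.symm p) := by
    rw [Complex.integral_comp_polarCoord_symm]
  -- Step 3: restrict to the rectangle
  set Φ : ℝ × ℝ → ℝ := fun p => p.1 * H (circleMap 0 p.1 p.2) with hΦ
  set S : Set (ℝ × ℝ) := {p : ℝ × ℝ | |p.1| ∈ Ioc (ρ/2) ρ} with hS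
  have hmS : MeasurableSet S :=
    (measurable_fst.abs) measurableSet_Ioc
  have hfun : (fun p : ℝ × ℝ => p.1 • Set.indicator A₀ H (Complex.polarCoord.symm p))
      = Set.indicator S Φ := by
    funext p
    have habs : ‖Complex.polarCoord.symm p‖ = |p.1| := Complex.norm_polarCoord_symm p
    have hmem : Complex.polarCoord.symm p ∈ A₀ ↔ p ∈ S := by
      simp only [hA₀, hS, mem_diff, mem_closedBall, dist_zero_right,
        habs, mem_setOf_eq, mem_Ioc, not_le]
      tauto
    by_cases hp : p ∈ S
    · rw [Set.indicator_of_mem (hmem.mpr hp), Set.indicator_of_mem hp, hΦ]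
      simp only [smul_eq_mul, polar_symm_eq]
    · rw [Set.indicator_of_notMem (fun h => hp (hmem.mp h)), Set.indicator_of_notMem hp]
      simp
  have hTS : polarCoord.target ∩ S = Ioc (ρ/2) ρ ×ˢ Ioo (-Real.pi) Real.pi := by
    ext p
    simp only [polarCoord_target, hS, Set.mem_inter_iff, Set.mem_prod, mem_Ioi, mem_Ioo,
      mem_setOf_eq, mem_Ioc]
    constructor
    · rintro ⟨⟨h1, h2⟩, h3, h4⟩
      rw [abs_of_pos h1] at h3 h4
      exact ⟨⟨h3, h4⟩, h2⟩
    · rintro ⟨⟨h3, h4⟩, h2⟩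
      have h1 : 0 < p.1 := lt_trans (by positivity) h3
      rw [abs_of_pos h1]
      exact ⟨⟨h1, h2⟩, h3, h4⟩
  have step3 : ∫ p in polarCoord.target, p.1 • Set.indicator A₀ H (Complex.polarCoord.symm p)
      = ∫ p in Ioc (ρ/2) ρ ×ˢ Ioo (-Real.pi) Real.pi, Φ p := by
    rw [hfun, MeasureTheory.setIntegral_indicator hmS, hTS]
  -- integrability of Φ on the rectangle
  have hball : ∀ p : ℝ × ℝ, |p.1| ≤ ρ → z + circleMap 0 p.1 p.2 ∈ ball (0:ℂ) 1 := by
    intro p hp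
    simp only [mem_ball, dist_zero_right]
    have h1 : ‖z + circleMap 0 p.1 p.2‖ ≤ ‖z‖ + ‖circleMap 0 p.1 p.2‖ := norm_add_le _ _
    have h2 : ‖circleMap 0 p.1 p.2‖ = |p.1| := by
      simp [norm_circleMap_zero]
    rw [h2] at h1
    have : ‖z‖ + |p.1| ≤ ‖z‖ + ρ := by linarith
    have hlt : ‖z‖ + ρ < 1 := by rw [hρdef]; linarith
    linarith
  have hcontψ : Continuous (fun p : ℝ × ℝ => z + circleMap 0 p.1 p.2) := by
    simp only [circleMap, zero_add]
    fun_prop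
  have hK : IsCompact (Icc (ρ/2) ρ ×ˢ Icc (-Real.pi) Real.pi) :=
    isCompact_Icc.prod isCompact_Icc
  have hcontΦ : ContinuousOn Φ (Icc (ρ/2) ρ ×ˢ Icc (-Real.pi) Real.pi) := by
    have hmaps : ∀ p ∈ Icc (ρ/2) ρ ×ˢ Icc (-Real.pi) Real.pi,
        z + circleMap 0 p.1 p.2 ∈ ball (0:ℂ) 1 := by
      rintro p ⟨hp1, _⟩
      refine hball p ?_
      rw [abs_le]
      constructor <;> [linarith [hp1.1, hρ.le]; exact hp1.2]
    exact continuousOn_fst.mul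
      ((((hf.continuousOn.comp hcontψ.continuousOn hmaps).sub continuousOn_const).norm).pow 2)
  have hintΦ : IntegrableOn Φ (Ioc (ρ/2) ρ ×ˢ Ioo (-Real.pi) Real.pi)
      (volume.prod volume) := by
    have h1 : IntegrableOn Φ (Icc (ρ/2) ρ ×ˢ Icc (-Real.pi) Real.pi) volume :=
      hcontΦ.integrableOn_compact hK
    rw [← Measure.volume_eq_prod]
    exact h1.mono_set (Set.prod_mono Ioc_subset_Icc_self Ioo_subset_Icc_self)
  -- Step 4: Fubini
  have step4 : ∫ p in Ioc (ρ/2) ρ ×ˢ Ioo (-Real.pi) Real.pi, Φ p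
      = ∫ r in Ioc (ρ/2) ρ, ∫ θ in Ioo (-Real.pi) Real.pi, Φ (r, θ) := by
    rw [Measure.volume_eq_prod]
    exact MeasureTheory.setIntegral_prod Φ hintΦ
  -- Step 5: pointwise lower bound in r
  have key : ∀ r ∈ Ioc (ρ/2) ρ,
      2*Real.pi*‖deriv f z‖^2*r^3 ≤ ∫ θ in Ioo (-Real.pi) Real.pi, Φ (r, θ) := by
    intro r hr
    have hr0 : 0 < r := lt_trans (by positivity) hr.1
    have hΦeq : ∀ θ : ℝ, Φ (r, θ) = r * ‖f (circleMap z r θ) - f z‖^2 := by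
      intro θ
      have : z + circleMap 0 r θ = circleMap z r θ := by
        rw [← circleMap_sub_center z r θ]; ring
      simp only [hΦ, hH, this]
    have hIoo : ∫ θ in Ioo (-Real.pi) Real.pi, Φ (r, θ)
        = ∫ θ in (-Real.pi)..Real.pi, r * ‖f (circleMap z r θ) - f z‖^2 := by
      rw [intervalIntegral.integral_of_le (by linarith [Real.pi_pos] : -Real.pi ≤ Real.pi),
        MeasureTheory.integral_Ioc_eq_integral_Ioo]
      exact setIntegral_congr_fun measurableSet_Ioo (fun θ _ => hΦeq θ)
    have hper : Function.Periodic (fun θ => r * ‖f (circleMap z r θ) - f z‖^2) (2*Real.pi) := by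
      intro θ
      simp only [periodic_circleMap z r θ]
    have hshift : ∫ θ in (-Real.pi)..Real.pi, r * ‖f (circleMap z r θ) - f z‖^2
        = ∫ θ in (0:ℝ)..(2*Real.pi), r * ‖f (circleMap z r θ) - f z‖^2 := by
      have h2 := hper.intervalIntegral_add_eq (-Real.pi) 0
      rw [zero_add, show -Real.pi + 2*Real.pi = Real.pi by ring] at h2
      exact h2
    rw [hIoo, hshift, intervalIntegral.integral_const_mul]
    have hcb := circle_bound f hf hz hr0 (by rw [← hρdef]; exact hr.2)
    nlinarith [hcb, hr0]
  -- Step 6: integrate in r and conclude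
  have hint_r : IntegrableOn (fun r => ∫ θ in Ioo (-Real.pi) Real.pi, Φ (r, θ))
      (Ioc (ρ/2) ρ) volume := by
    have h := hintΦ
    rw [IntegrableOn, ← Measure.prod_restrict] at h
    exact h.integral_prod_left
  have hmono : ∫ r in Ioc (ρ/2) ρ, 2*Real.pi*‖deriv f z‖^2*r^3
      ≤ ∫ r in Ioc (ρ/2) ρ, ∫ θ in Ioo (-Real.pi) Real.pi, Φ (r, θ) := by
    refine MeasureTheory.setIntegral_mono_on ?_ hint_r measurableSet_Ioc key
    exact (Continuous.integrableOn_Ioc (by fun_prop))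
  have hcompute : ∫ r in Ioc (ρ/2) ρ, 2*Real.pi*‖deriv f z‖^2*r^3
      = 2*Real.pi*‖deriv f z‖^2 * ((ρ^4 - (ρ/2)^4)/4) := by
    rw [← intervalIntegral.integral_of_le (by linarith : ρ/2 ≤ ρ),
      intervalIntegral.integral_const_mul, integral_pow]
    norm_num
  have hfinal : 15/32*Real.pi*ρ^4*‖deriv f z‖^2
      = 2*Real.pi*‖deriv f z‖^2 * ((ρ^4 - (ρ/2)^4)/4) := by ring
  rw [show (∫ w in A, G w ∂volume)
      = ∫ r in Ioc (ρ/2) ρ, ∫ θ in Ioo (-Real.pi) Real.pi, Φ (r, θ) from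
    step1.trans (step2.trans (step3.trans step4))]
  rw [hfinal, ← hcompute]
  exact hmono

lemma pointwise_bound (σ τ β : ℝ) (hσ : -1 < σ) (hτ : -1 < τ)
    (hβ1 : max σ τ / 2 - 1 < β)
    (f : ℂ → ℂ) (hf : DifferentiableOn ℂ f (ball 0 1))
    {z : ℂ} (hz : ‖z‖ < 1) :
    ENNReal.ofReal
        ((15/8192)*Real.pi * (3:ℝ)^(-(2*(β+2))) * min (((1:ℝ)/4)^τ) ((3:ℝ)^τ)) *
      ENNReal.ofReal (‖deriv f z‖ ^ 2 * (1 - ‖z‖ ^ 2) ^ (σ + τ - 2 * β))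
      ≤ ∫⁻ w in ball (0:ℂ) 1,
          ENNReal.ofReal (‖f z - f w‖ ^ 2 / ‖1 - conj w * z‖ ^ (2 * (β + 2)) *
            (1 - ‖z‖ ^ 2) ^ σ * (1 - ‖w‖ ^ 2) ^ τ) ∂volume := by
  set e : ℝ := 2*(β+2) with he_def
  have he : 0 < e := by
    have h1 := le_max_left σ τ
    rw [he_def]; linarith
  have hznn : 0 ≤ ‖z‖ := norm_nonneg z
  set D : ℝ := 1 - ‖z‖^2 with hD_def
  have hD : 0 < D := by rw [hD_def]; nlinarith
  set ρ : ℝ := (1-‖z‖)/2 with hρ_def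
  have hρ : 0 < ρ := by rw [hρ_def]; linarith
  have hρD : D ≤ 4*ρ := by rw [hD_def, hρ_def]; nlinarith
  have hρD2 : 2*ρ ≤ D := by rw [hD_def, hρ_def]; nlinarith
  set m : ℝ := min (((1:ℝ)/4)^τ) ((3:ℝ)^τ) with hm_def
  have hm : 0 < m := lt_min (Real.rpow_pos_of_pos (by norm_num) τ)
    (Real.rpow_pos_of_pos (by norm_num) τ)
  set k : ℝ := (3:ℝ)^(-e) * m * D^(σ+τ-e) with hk_def
  have hk : 0 < k := by
    refine mul_pos (mul_pos (Real.rpow_pos_of_pos (by norm_num) _) hm)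
      (Real.rpow_pos_of_pos hD _)
  set A : Set ℂ := closedBall z ρ \ closedBall z (ρ/2) with hA_def
  have hmA : MeasurableSet A := measurableSet_closedBall.diff measurableSet_closedBall
  have hsubcb : closedBall z ρ ⊆ ball (0:ℂ) 1 := by
    intro w hw
    simp only [mem_closedBall, dist_eq_norm] at hw
    simp only [mem_ball, dist_zero_right]
    have : ‖w‖ ≤ ‖w - z‖ + ‖z‖ := by simpa using norm_add_le (w - z) z
    rw [hρ_def] at hw; linarith
  have hsubA : A ⊆ ball (0:ℂ) 1 := fun w hw => hsubcb hw.1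
  set N : ℂ → ℝ := fun w => ‖f z - f w‖^2 with hN_def
  -- pointwise bound on the annulus
  have hpoint : ∀ w ∈ A, k * N w
      ≤ ‖f z - f w‖ ^ 2 / ‖1 - conj w * z‖ ^ e * D ^ σ * (1 - ‖w‖ ^ 2) ^ τ := by
    intro w hw
    obtain ⟨hw1, hw2⟩ := hw
    simp only [mem_closedBall, dist_eq_norm] at hw1 hw2
    push_neg at hw2
    have hwz : ‖w - z‖ ≤ ρ := hw1
    have hwub : ‖w‖ ≤ ‖z‖ + ρ := by
      have : ‖w‖ ≤ ‖w - z‖ + ‖z‖ := by simpa using norm_add_le (w - z) z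
      linarith
    have hwlb : ‖z‖ - ρ ≤ ‖w‖ := by
      have : ‖z‖ ≤ ‖z - w‖ + ‖w‖ := by simpa using norm_add_le (z - w) w
      rw [norm_sub_rev] at this
      linarith
    have hw1' : ‖w‖ < 1 := by rw [hρ_def] at hwub; linarith [hρ]
    have hDw_low : D/4 ≤ 1 - ‖w‖^2 := by
      have h1 : 1 - ‖w‖ ≥ ρ := by rw [hρ_def] at hwub ⊢; linarith
      nlinarith [norm_nonneg w]
    have hDw_up : 1 - ‖w‖^2 ≤ 3*D := by
      have h1 : 1 - ‖w‖ ≤ 3*ρ := by rw [hρ_def] at hwlb ⊢; linarith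
      nlinarith [norm_nonneg w]
    -- upper bound for the denominator
    have hden_up : ‖1 - conj w * z‖ ≤ 3*D := by
      have hsplit : 1 - conj w * z = (1 - conj z * z) + (conj z - conj w) * z := by ring
      have h1 : ‖(1 : ℂ) - conj z * z‖ = D := by
        rw [← Complex.normSq_eq_conj_mul_self]
        rw [show ((1 : ℂ) - (Complex.normSq z : ℝ)) = ((1 - ‖z‖^2 : ℝ) : ℂ) by
          norm_cast
          rw [Complex.normSq_eq_norm_sq]]
        rw [Complex.norm_real]
        show |D| = D
        exact abs_of_pos hD
      have h2 : ‖(conj z - conj w) * z‖ ≤ ρ := by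
        rw [norm_mul, ← map_sub]
        have : ‖conj (z - w)‖ = ‖z - w‖ := RCLike.norm_conj _
        rw [this, norm_sub_rev]
        calc ‖w - z‖ * ‖z‖ ≤ ρ * 1 := by
              apply mul_le_mul hwz hz.le (norm_nonneg z) hρ.le
          _ = ρ := mul_one ρ
      calc ‖1 - conj w * z‖ ≤ ‖(1 : ℂ) - conj z * z‖ + ‖(conj z - conj w) * z‖ := by
            rw [hsplit]; exact norm_add_le _ _
        _ ≤ D + ρ := by rw [h1]; linarith
        _ ≤ 3*D := by linarith
    have hden_low : 0 < ‖1 - conj w * z‖ := by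
      have h1 : ‖(1:ℂ)‖ - ‖conj w * z‖ ≤ ‖1 - conj w * z‖ := norm_sub_norm_le _ _
      have h2 : ‖conj w * z‖ ≤ ‖z‖ := by
        rw [norm_mul, RCLike.norm_conj]
        calc ‖w‖ * ‖z‖ ≤ 1 * ‖z‖ := by
              apply mul_le_mul_of_nonneg_right hw1'.le hznn
          _ = ‖z‖ := one_mul _
      simp only [norm_one] at h1
      linarith
    -- the three factor bounds
    have hfac1 : ‖1 - conj w * z‖ ^ e ≤ (3*D)^e :=
      Real.rpow_le_rpow (norm_nonneg _) hden_up he.le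
    have hfac2 : m * D^τ ≤ (1 - ‖w‖^2)^τ := by
      rcases le_or_gt 0 τ with hτ0 | hτ0
      · calc m * D^τ ≤ ((1:ℝ)/4)^τ * D^τ :=
              mul_le_mul_of_nonneg_right (min_le_left _ _) (Real.rpow_pos_of_pos hD τ).le
          _ = (D/4)^τ := by
              rw [← Real.mul_rpow (by norm_num) hD.le]; ring_nf
          _ ≤ (1 - ‖w‖^2)^τ := Real.rpow_le_rpow (by positivity) hDw_low hτ0
      · calc m * D^τ ≤ (3:ℝ)^τ * D^τ :=
              mul_le_mul_of_nonneg_right (min_le_right _ _) (Real.rpow_pos_of_pos hD τ).le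
          _ = (3*D)^τ := (Real.mul_rpow (by norm_num) hD.le).symm
          _ ≤ (1 - ‖w‖^2)^τ := by
              apply Real.rpow_le_rpow_of_nonpos (by nlinarith) hDw_up hτ0.le
    have hchain : N w / (3*D)^e * D^σ * (m * D^τ)
        ≤ ‖f z - f w‖ ^ 2 / ‖1 - conj w * z‖ ^ e * D ^ σ * (1 - ‖w‖ ^ 2) ^ τ := by
      have h3De : (0:ℝ) < (3*D)^e := Real.rpow_pos_of_pos (by linarith) e
      have hb : (0:ℝ) < ‖1 - conj w * z‖ ^ e := Real.rpow_pos_of_pos hden_low e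
      have hdiv : N w / (3*D)^e ≤ ‖f z - f w‖ ^ 2 / ‖1 - conj w * z‖ ^ e := by
        apply div_le_div_of_nonneg_left (by positivity) hb hfac1
      apply mul_le_mul
      · apply mul_le_mul_of_nonneg_right hdiv (Real.rpow_pos_of_pos hD σ).le
      · exact hfac2
      · positivity
      · positivity
    refine le_trans (le_of_eq ?_) hchain
    -- algebra: k * N w = N w / (3*D)^e * D^σ * (m * D^τ)
    rw [hk_def]
    have h3 : (3*D)^e = (3:ℝ)^e * D^e := Real.mul_rpow (by norm_num) hD.le
    have h4 : (3:ℝ)^(-e) = ((3:ℝ)^e)⁻¹ := Real.rpow_neg (by norm_num) e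
    have h5 : D^(σ+τ-e) = D^σ * D^τ * (D^e)⁻¹ := by
      rw [show σ+τ-e = σ+τ+(-e) by ring, Real.rpow_add hD, Real.rpow_add hD,
        Real.rpow_neg hD.le]
    rw [h3, h4, h5]
    rw [div_eq_mul_inv, mul_inv]
    ring
  -- integrability of N on A
  have hNint : IntegrableOn N A volume := by
    have hcN : ContinuousOn N (closedBall z ρ) :=
      ((continuousOn_const.sub (hf.continuousOn.mono hsubcb)).norm).pow 2
    exact (hcN.integrableOn_compact (isCompact_closedBall z ρ)).mono_set diff_subset
  have hNnn : 0 ≤ᵐ[volume.restrict A] N := ae_of_all _ (fun w => by positivity)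
  have hst1 : ∫⁻ w in A, ENNReal.ofReal (k * N w) ∂volume
      ≤ ∫⁻ w in ball (0:ℂ) 1,
          ENNReal.ofReal (‖f z - f w‖ ^ 2 / ‖1 - conj w * z‖ ^ e *
            D ^ σ * (1 - ‖w‖ ^ 2) ^ τ) ∂volume := by
    refine le_trans (lintegral_mono_ae ?_)
      (lintegral_mono' (Measure.restrict_mono hsubA le_rfl) le_rfl)
    filter_upwards [ae_restrict_mem hmA] with w hw
    exact ENNReal.ofReal_le_ofReal (hpoint w hw)
  have hst2 : ∫⁻ w in A, ENNReal.ofReal (k * N w) ∂volume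
      = ENNReal.ofReal k * ENNReal.ofReal (∫ w in A, N w ∂volume) := by
    simp_rw [ENNReal.ofReal_mul hk.le]
    rw [lintegral_const_mul' _ _ ENNReal.ofReal_ne_top,
      ← ofReal_integral_eq_lintegral_ofReal hNint hNnn]
  have hst3 : (15/32)*Real.pi*ρ^4*‖deriv f z‖^2 ≤ ∫ w in A, N w ∂volume := by
    have hann := annulus_bound f hf hz
    rw [show (1-‖z‖)/4 = ρ/2 by rw [hρ_def]; ring] at hann
    rw [← hρ_def] at hann
    refine le_trans hann (le_of_eq ?_)
    apply setIntegral_congr_fun hmA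
    intro w _
    simp [hN_def, norm_sub_rev]
  have hc0 : (0:ℝ) < (15/8192)*Real.pi * (3:ℝ)^(-e) * m := by
    have := Real.rpow_pos_of_pos (show (0:ℝ) < 3 by norm_num) (-e)
    positivity
  have hDpow' : D^(σ+τ-2*β) = D^(σ+τ-e) * D^(4:ℕ) := by
    rw [← Real.rpow_natCast D 4, ← Real.rpow_add hD]
    congr 1
    push_cast
    rw [he_def]; ring
  calc ENNReal.ofReal ((15/8192)*Real.pi * (3:ℝ)^(-e) * m) *
        ENNReal.ofReal (‖deriv f z‖ ^ 2 * D ^ (σ + τ - 2 * β))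
      = ENNReal.ofReal ((15/8192)*Real.pi * (3:ℝ)^(-e) * m *
          (‖deriv f z‖ ^ 2 * D ^ (σ + τ - 2 * β))) := (ENNReal.ofReal_mul hc0.le).symm
    _ = ENNReal.ofReal (k * ((15/32)*Real.pi*(D/4)^4*‖deriv f z‖^2)) := by
        congr 1
        rw [hk_def, hDpow']
        ring
    _ ≤ ENNReal.ofReal (k * ((15/32)*Real.pi*ρ^4*‖deriv f z‖^2)) := by
        apply ENNReal.ofReal_le_ofReal
        have h1 : (D/4)^4 ≤ ρ^4 := by
          apply pow_le_pow_left₀ (by positivity) (by linarith)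
        have h2 : (0:ℝ) ≤ ‖deriv f z‖^2 := by positivity
        have h3 : 15/32*Real.pi*(D/4)^4 ≤ 15/32*Real.pi*ρ^4 := by nlinarith [Real.pi_pos]
        have h4 := mul_le_mul_of_nonneg_left (mul_le_mul_of_nonneg_right h3 h2) hk.le
        linarith [h4]
    _ = ENNReal.ofReal k * ENNReal.ofReal ((15/32)*Real.pi*ρ^4*‖deriv f z‖^2) :=
        ENNReal.ofReal_mul hk.le
    _ ≤ ENNReal.ofReal k * ENNReal.ofReal (∫ w in A, N w ∂volume) :=
        mul_le_mul_right (ENNReal.ofReal_le_ofReal hst3) _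
    _ = ∫⁻ w in A, ENNReal.ofReal (k * N w) ∂volume := hst2.symm
    _ ≤ _ := hst1

end AuxiliaryLemmas


/-- Lower bound in the double-integral characterization of Dirichlet-type spaces:
for `σ, τ > -1` and `max(σ,τ)/2 - 1 < β ≤ (σ+τ)/2`, the squared `𝒟_{σ+τ-2β}(𝔻)`
seminorm of `f` is controlled by the double integral of
`|f z - f w|² / |1 - conj w * z|^{2(β+2)}` against `dA_σ × dA_τ`. -/
theorem dirichlet_le_double_integral (σ τ β : ℝ) (hσ : -1 < σ) (hτ : -1 < τ)
    (hβ1 : max σ τ / 2 - 1 < β) (hβ2 : β ≤ (σ + τ) / 2) :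
    ∃ c : ℝ, 0 < c ∧ ∀ f : ℂ → ℂ, DifferentiableOn ℂ f (ball 0 1) →
      ENNReal.ofReal c *
          (∫⁻ z in ball (0 : ℂ) 1,
            ENNReal.ofReal (‖deriv f z‖ ^ 2 * (1 - ‖z‖ ^ 2) ^ (σ + τ - 2 * β)) ∂dA)
        ≤ ∫⁻ z in ball (0 : ℂ) 1, ∫⁻ w in ball (0 : ℂ) 1,
            ENNReal.ofReal (‖f z - f w‖ ^ 2 / ‖1 - conj w * z‖ ^ (2 * (β + 2)) *
              (1 - ‖z‖ ^ 2) ^ σ * (1 - ‖w‖ ^ 2) ^ τ) ∂dA ∂dA := by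
  set c₀ : ℝ := (15/8192)*Real.pi * (3:ℝ)^(-(2*(β+2))) * min (((1:ℝ)/4)^τ) ((3:ℝ)^τ)
    with hc₀_def
  have hc₀ : 0 < c₀ := by
    have h1 := Real.rpow_pos_of_pos (show (0:ℝ) < 3 by norm_num) (-(2*(β+2)))
    have h2 : 0 < min (((1:ℝ)/4)^τ) ((3:ℝ)^τ) :=
      lt_min (Real.rpow_pos_of_pos (by norm_num) τ) (Real.rpow_pos_of_pos (by norm_num) τ)
    rw [hc₀_def]
    positivity
  refine ⟨(1/Real.pi) * c₀, by positivity, fun f hf => ?_⟩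
  rw [ENNReal.ofReal_mul (by positivity : (0:ℝ) ≤ 1/Real.pi)]
  rw [mul_assoc, ← lintegral_const_mul' _ _ ENNReal.ofReal_ne_top,
    ← lintegral_const_mul' _ _ ENNReal.ofReal_ne_top]
  refine lintegral_mono_ae ?_
  filter_upwards [ae_restrict_mem measurableSet_ball] with z hzball
  have hz : ‖z‖ < 1 := by simpa [mem_ball, dist_zero_right] using hzball
  have hkey := pointwise_bound σ τ β hσ hτ hβ1 f hf hz
  have hdA : ∫⁻ w in ball (0:ℂ) 1,
        ENNReal.ofReal (‖f z - f w‖ ^ 2 / ‖1 - conj w * z‖ ^ (2 * (β + 2)) *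
          (1 - ‖z‖ ^ 2) ^ σ * (1 - ‖w‖ ^ 2) ^ τ) ∂dA
      = ENNReal.ofReal (1/Real.pi) * ∫⁻ w in ball (0:ℂ) 1,
          ENNReal.ofReal (‖f z - f w‖ ^ 2 / ‖1 - conj w * z‖ ^ (2 * (β + 2)) *
            (1 - ‖z‖ ^ 2) ^ σ * (1 - ‖w‖ ^ 2) ^ τ) ∂volume := by
    rw [show dA = ENNReal.ofReal (1/Real.pi) • (volume : Measure ℂ) from rfl,
      Measure.restrict_smul, lintegral_smul_measure, smul_eq_mul]
  rw [hdA]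
  exact mul_le_mul_right hkey _
end

section
/- Let φ be a holomorphic self-map of the unit disc 𝔻 that extends to a C¹ map on the closed disc, and let ζ ∈ ℂ with |ζ| = 1 be a boundary point such that |φ(ζ)| = 1 (where φ(ζ) denotes the value of the continuous extension). Then the boundary value of the derivative of φ at ζ is nonzero; that is, if g is the continuous extension of the derivative φ' to the closed unit disc, then g(ζ) ≠ 0. -/
open Metric

lemma moebius_identity (a b : ℂ) :
    ‖1 - (starRingEnd ℂ) a * b‖ ^ 2 - ‖b - a‖ ^ 2 = (1 - ‖a‖ ^ 2) * (1 - ‖b‖ ^ 2) := by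
  simp only [Complex.sq_norm, Complex.normSq_apply,
    Complex.sub_re, Complex.sub_im, Complex.mul_re, Complex.mul_im,
    Complex.one_re, Complex.one_im, Complex.conj_re, Complex.conj_im]
  ring

lemma schwarzPick_aux (φ : ℂ → ℂ)
    (hφd : DifferentiableOn ℂ φ (ball 0 1))
    (hφm : Set.MapsTo φ (ball 0 1) (ball 0 1))
    {w : ℂ} (hw : w ∈ ball (0:ℂ) 1) :
    ‖φ w - φ 0‖ ≤ ‖w‖ * ‖1 - (starRingEnd ℂ) (φ 0) * φ w‖ := by
  set a := φ 0 with ha'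
  have ha : ‖a‖ < 1 := mem_ball_zero_iff.1 (hφm (mem_ball_self one_pos))
  have hden : ∀ z ∈ ball (0:ℂ) 1, 1 - (starRingEnd ℂ) a * φ z ≠ 0 := by
    intro z hz
    have hz' : ‖φ z‖ < 1 := mem_ball_zero_iff.1 (hφm hz)
    have : ‖(starRingEnd ℂ) a * φ z‖ < 1 := by
      rw [norm_mul, RCLike.norm_conj]
      calc ‖a‖ * ‖φ z‖ ≤ 1 * ‖φ z‖ := by
            exact mul_le_mul_of_nonneg_right ha.le (norm_nonneg _)
        _ < 1 := by simpa using hz'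
    intro h
    rw [sub_eq_zero] at h
    rw [← h] at this
    simp at this
  set f : ℂ → ℂ := fun z => (φ z - a) / (1 - (starRingEnd ℂ) a * φ z) with hf
  have hfd : DifferentiableOn ℂ f (ball 0 1) :=
    (hφd.sub (differentiableOn_const a)).div
      ((differentiableOn_const 1).sub ((differentiableOn_const _).mul hφd)) hden
  have hfm : Set.MapsTo f (ball 0 1) (ball 0 1) := by
    intro z hz
    have hz' : ‖φ z‖ < 1 := mem_ball_zero_iff.1 (hφm hz)
    rw [mem_ball_zero_iff, hf]
    have hdz := hden z hz
    rw [norm_div, div_lt_one (norm_pos_iff.2 hdz)]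
    have key := moebius_identity a (φ z)
    have h1 : 0 < (1 - ‖a‖ ^ 2) * (1 - ‖φ z‖ ^ 2) := by
      apply mul_pos <;> nlinarith [norm_nonneg a, norm_nonneg (φ z)]
    nlinarith [norm_nonneg (φ z - a), norm_nonneg (1 - (starRingEnd ℂ) a * φ z)]
  have hf0 : f 0 = 0 := by simp [hf]; exact Or.inl (sub_self _)
  have := Complex.norm_le_norm_of_mapsTo_ball hfd (hfm.mono_right ball_subset_closedBall) hf0 (mem_ball_zero_iff.1 hw)
  rw [hf] at this
  have hdw := hden w hw
  rw [norm_div, div_le_iff₀ (norm_pos_iff.2 hdw)] at this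
  exact this

lemma growth_aux (φ : ℂ → ℂ)
    (hφd : DifferentiableOn ℂ φ (ball 0 1))
    (hφm : Set.MapsTo φ (ball 0 1) (ball 0 1))
    {w : ℂ} (hw : w ∈ ball (0:ℂ) 1) :
    (1 - ‖φ 0‖) * (1 - ‖w‖) ≤ 2 * (1 + ‖φ 0‖) * (1 - ‖φ w‖) := by
  have ha : ‖φ 0‖ < 1 := mem_ball_zero_iff.1 (hφm (mem_ball_self one_pos))
  have hb : ‖φ w‖ < 1 := mem_ball_zero_iff.1 (hφm hw)
  have hr : ‖w‖ < 1 := mem_ball_zero_iff.1 hw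
  have hsp := schwarzPick_aux φ hφd hφm hw
  have key := moebius_identity (φ 0) (φ w)
  set D := ‖1 - (starRingEnd ℂ) (φ 0) * φ w‖ with hD
  have hDlb : 1 - ‖φ 0‖ * ‖φ w‖ ≤ D := by
    calc 1 - ‖φ 0‖ * ‖φ w‖ = ‖(1:ℂ)‖ - ‖(starRingEnd ℂ) (φ 0) * φ w‖ := by
          rw [norm_mul, RCLike.norm_conj]; simp
      _ ≤ D := norm_sub_norm_le _ _
  have hN : (0:ℝ) ≤ ‖φ w - φ 0‖ := norm_nonneg _
  have h2 : ‖φ w - φ 0‖ ^ 2 ≤ ‖w‖ ^ 2 * D ^ 2 := by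
    have := mul_self_le_mul_self hN hsp
    nlinarith [norm_nonneg w, norm_nonneg (1 - (starRingEnd ℂ) (φ 0) * φ w)]
  -- D^2 * (1 - ‖w‖^2) ≤ (1-a²)(1-b²)
  have h3 : D ^ 2 * (1 - ‖w‖ ^ 2) ≤ (1 - ‖φ 0‖ ^ 2) * (1 - ‖φ w‖ ^ 2) := by nlinarith
  have ha0 : (0:ℝ) ≤ ‖φ 0‖ := norm_nonneg _
  have hb0 : (0:ℝ) ≤ ‖φ w‖ := norm_nonneg _
  have hr0 : (0:ℝ) ≤ ‖w‖ := norm_nonneg _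
  have e1 : 1 - ‖φ 0‖ ≤ D := le_trans (by nlinarith) hDlb
  have e2 : (1 - ‖φ 0‖) ^ 2 * (1 - ‖w‖ ^ 2) ≤ D ^ 2 * (1 - ‖w‖ ^ 2) := by
    apply mul_le_mul_of_nonneg_right _ (by nlinarith)
    nlinarith
  have e23 : (1 - ‖φ 0‖) * ((1 - ‖φ 0‖) * (1 - ‖w‖ ^ 2)) ≤
      (1 - ‖φ 0‖) * ((1 + ‖φ 0‖) * (1 - ‖φ w‖ ^ 2)) := by nlinarith
  have e4 : (1 - ‖φ 0‖) * (1 - ‖w‖ ^ 2) ≤ (1 + ‖φ 0‖) * (1 - ‖φ w‖ ^ 2) :=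
    le_of_mul_le_mul_left e23 (by linarith)
  have e5 : (1 - ‖φ 0‖) * (1 - ‖w‖) ≤ (1 - ‖φ 0‖) * (1 - ‖w‖ ^ 2) :=
    mul_le_mul_of_nonneg_left (by nlinarith) (by linarith)
  have e6 : (1 + ‖φ 0‖) * (1 - ‖φ w‖ ^ 2) ≤ 2 * (1 + ‖φ 0‖) * (1 - ‖φ w‖) := by
    nlinarith [mul_nonneg (mul_nonneg (by linarith : (0:ℝ) ≤ 1 + ‖φ 0‖)
      (by linarith : (0:ℝ) ≤ 1 - ‖φ w‖)) (by linarith : (0:ℝ) ≤ 1 - ‖φ w‖)]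
  linarith

/-- Julia–Carathéodory consequence: if `φ` is a holomorphic self-map of the unit disc which
is `C¹` on the closed disc, `ζ` is a boundary point with `|φ ζ| = 1`, and `g` is the
continuous extension of `φ'` to the closed disc, then `g ζ ≠ 0`. -/
theorem boundary_derivative_ne_zero (φ : ℂ → ℂ)
    (hφd : DifferentiableOn ℂ φ (ball 0 1))
    (hφm : Set.MapsTo φ (ball 0 1) (ball 0 1))
    (hφc : ContDiffOn ℝ 1 φ (closedBall 0 1))
    (g : ℂ → ℂ) (hg : ContinuousOn g (closedBall 0 1))
    (hgφ : ∀ z ∈ ball (0 : ℂ) 1, g z = deriv φ z)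
    (ζ : ℂ) (hζ : ‖ζ‖ = 1) (hφζ : ‖φ ζ‖ = 1) :
    g ζ ≠ 0 := by
  intro hg0
  have ha : ‖φ 0‖ < 1 := mem_ball_zero_iff.1 (hφm (mem_ball_self one_pos))
  set c : ℝ := (1 - ‖φ 0‖) / (2 * (1 + ‖φ 0‖)) with hc
  have hcpos : 0 < c := by
    apply div_pos (by linarith)
    nlinarith [norm_nonneg (φ 0)]
  have hnorm : ∀ r : ℝ, ‖(↑r * ζ : ℂ)‖ = |r| := by
    intro r
    rw [norm_mul, Complex.norm_real, hζ, mul_one, Real.norm_eq_abs]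
  -- growth bound along the radius
  have hgrow : ∀ r : ℝ, 0 ≤ r → r < 1 → c * (1 - r) ≤ 1 - ‖φ (↑r * ζ)‖ := by
    intro r hr0 hr1
    have hmem : (↑r * ζ : ℂ) ∈ ball (0:ℂ) 1 := by
      rw [mem_ball_zero_iff, hnorm, abs_of_nonneg hr0]; exact hr1
    have := growth_aux φ hφd hφm hmem
    rw [hnorm, abs_of_nonneg hr0] at this
    rw [hc, div_mul_eq_mul_div, div_le_iff₀ (by nlinarith [norm_nonneg (φ 0)])]
    linarith
  set u : ℝ → ℝ := fun r => ((starRingEnd ℂ) (φ ζ) * φ (↑r * ζ)).re with hu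
  set G : ℝ → ℝ := fun r => ((starRingEnd ℂ) (φ ζ) * (g (↑r * ζ) * ζ)).re with hG
  have hmapsIcc : Set.MapsTo (fun r : ℝ => (↑r * ζ : ℂ)) (Set.Icc 0 1) (closedBall 0 1) := by
    intro r hr
    rw [mem_closedBall_zero_iff, hnorm]
    exact abs_le.2 ⟨by linarith [hr.1], hr.2⟩
  have hcont_inner : Continuous fun r : ℝ => (↑r * ζ : ℂ) :=
    Complex.continuous_ofReal.mul continuous_const
  have hucont : ContinuousOn u (Set.Icc 0 1) :=
    Complex.continuous_re.comp_continuousOn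
      (continuousOn_const.mul ((hφc.continuousOn).comp hcont_inner.continuousOn hmapsIcc))
  have hGcont : ContinuousOn G (Set.Icc 0 1) :=
    Complex.continuous_re.comp_continuousOn
      (continuousOn_const.mul
        (((hg.comp hcont_inner.continuousOn hmapsIcc).mul continuousOn_const)))
  have hu1 : u 1 = 1 := by
    have h1 : ((1:ℝ):ℂ) * ζ = ζ := by push_cast; ring
    have h2 : ((Complex.normSq (φ ζ) : ℂ)) = (starRingEnd ℂ) (φ ζ) * φ ζ :=
      Complex.normSq_eq_conj_mul_self
    have h3 : Complex.normSq (φ ζ) = 1 := by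
      rw [Complex.normSq_eq_norm_sq, hφζ, one_pow]
    simp only [hu, h1, ← h2, Complex.ofReal_re, h3]
  have hule : ∀ r : ℝ, 0 ≤ r → r < 1 → u r ≤ ‖φ (↑r * ζ)‖ := by
    intro r hr0 hr1
    calc u r ≤ ‖(starRingEnd ℂ) (φ ζ) * φ (↑r * ζ)‖ := Complex.re_le_norm _
      _ = ‖φ (↑r * ζ)‖ := by rw [norm_mul, RCLike.norm_conj, hφζ, one_mul]
  have hG1 : G 1 = 0 := by
    have h1 : ((1:ℝ):ℂ) * ζ = ζ := by push_cast; ring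
    simp [hG, h1, hg0]
  -- derivative of u
  have hderiv : ∀ x : ℝ, 0 ≤ x → x < 1 → HasDerivAt u (G x) x := by
    intro x hx0 hx1
    have hmem : (↑x * ζ : ℂ) ∈ ball (0:ℂ) 1 := by
      rw [mem_ball_zero_iff, hnorm, abs_of_nonneg hx0]; exact hx1
    have hdφ : DifferentiableAt ℂ φ (↑x * ζ) :=
      hφd.differentiableAt (isOpen_ball.mem_nhds hmem)
    have h1 : HasDerivAt (fun z : ℂ => φ (z * ζ)) (deriv φ (↑x * ζ) * ζ) ↑x :=
      hdφ.hasDerivAt.comp (↑x : ℂ) (hasDerivAt_mul_const ζ)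
    have h2 : HasDerivAt (fun r : ℝ => φ (↑r * ζ)) (deriv φ (↑x * ζ) * ζ) x :=
      h1.comp_ofReal
    have h3 := h2.const_mul ((starRingEnd ℂ) (φ ζ))
    have h4 := (Complex.reCLM.hasFDerivAt).comp_hasDerivAt x h3
    have : G x = Complex.reCLM ((starRingEnd ℂ) (φ ζ) * (deriv φ (↑x * ζ) * ζ)) := by
      simp [hG, hgφ _ hmem]
    rw [this]
    exact h4
  -- continuity of G at 1 within Icc 0 1
  have hGat1 := (hGcont 1 (by norm_num : (1:ℝ) ∈ Set.Icc 0 1))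
  rw [Metric.continuousWithinAt_iff] at hGat1
  obtain ⟨δ, hδ, hδ'⟩ := hGat1 c hcpos
  set r₀ : ℝ := max (1 - δ / 2) (1 / 2) with hr₀
  have hr₀1 : r₀ < 1 := max_lt (by linarith) (by norm_num)
  have hr₀0 : (0:ℝ) ≤ r₀ := le_trans (by norm_num) (le_max_right _ _)
  obtain ⟨ξ, hξ, hξeq⟩ := exists_hasDerivAt_eq_slope u G hr₀1
    (hucont.mono (Set.Icc_subset_Icc hr₀0 le_rfl))
    (fun x hx => hderiv x (le_trans hr₀0 hx.1.le) hx.2)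
  -- lower bound: G ξ ≥ c
  have hlow : c ≤ G ξ := by
    rw [hξeq, le_div_iff₀ (by linarith)]
    have := hgrow r₀ hr₀0 hr₀1
    have := hule r₀ hr₀0 hr₀1
    linarith [hu1]
  -- upper bound: |G ξ| < c
  have hup : |G ξ| < c := by
    have hmem : ξ ∈ Set.Icc (0:ℝ) 1 := ⟨le_trans hr₀0 hξ.1.le, hξ.2.le⟩
    have hdist : dist ξ 1 < δ := by
      rw [Real.dist_eq, abs_of_nonpos (by linarith [hξ.2])]
      have : 1 - δ / 2 ≤ r₀ := le_max_left _ _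
      linarith [hξ.1]
    have := hδ' hmem hdist
    rwa [hG1, Real.dist_eq, sub_zero] at this
  linarith [le_abs_self (G ξ), hlow, hup]
end
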